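/- arXiv:2112.08292 — 3 statements merged into one kernel-verified Lean document; each statement's English description precedes it below -/
import Mathlib

section
/- For the token-ring Petri net with n ≥ 2 stations each having states {t, n} and transitions n →in t and t →out n, synchronized pairwise by interactions T[i, (i mod n)+1] (out of station i with in of station (i mod n)+1), a precise marking m is a deadlock if and only if either all stations are in state n or all stations are in state t. -/
/-- Places of the token-ring net: station index paired with `true` (= state t,
    has token) or `false` (= state n, no token). -/
abbrev RingPlace (n : ℕ) := Fin (n + 2) × Bool

/-- Pre-set of the transfer transition of station `i`. -/
def ringPre (n : ℕ) (i : Fin (n + 2)) : Set (RingPlace n) :=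
  {(i, true), (i + 1, false)}

/-- Post-set of the transfer transition of station `i`. -/
def ringPost (n : ℕ) (i : Fin (n + 2)) : Set (RingPlace n) :=
  {(i, false), (i + 1, true)}

/-- A marking is precise iff it contains exactly one of `t[i]`, `n[i]` per `i`. -/
def ringPrecise (n : ℕ) (m : Set (RingPlace n)) : Prop :=
  ∀ i : Fin (n + 2), ((i, true) ∈ m ↔ (i, false) ∉ m)

/-- The transfer transition of station `i` is enabled in `m`. -/
def ringEnabled (n : ℕ) (m : Set (RingPlace n)) (i : Fin (n + 2)) : Prop :=
  ringPre n i ⊆ m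

/-- A deadlock is a marking in which no transition is enabled. -/
def ringDeadlock (n : ℕ) (m : Set (RingPlace n)) : Prop :=
  ∀ i : Fin (n + 2), ¬ ringEnabled n m i

/-- The token count of a marking. -/
noncomputable def tokenCount (n : ℕ) (m : Set (RingPlace n)) : ℕ :=
  {i : Fin (n + 2) | (i, true) ∈ m}.ncard

/-- One firing step of the token-ring net. -/
def ringStep (n : ℕ) (m m' : Set (RingPlace n)) : Prop :=
  ∃ i : Fin (n + 2), ringPre n i ⊆ m ∧ m' = (m \ ringPre n i) ∪ ringPost n i

/-- A precise marking of the token-ring net is a deadlock iff all stations are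
    in state n or all stations are in state t. -/
theorem ring_deadlock_iff (n : ℕ) (m : Set (RingPlace n))
    (hprec : ringPrecise n m) :
    ringDeadlock n m ↔
      ((∀ i : Fin (n + 2), (i, false) ∈ m) ∨ (∀ i : Fin (n + 2), (i, true) ∈ m)) := by
  constructor
  · intro hd
    by_cases hall : ∀ i : Fin (n + 2), (i, false) ∈ m
    · exact Or.inl hall
    · push_neg at hall
      obtain ⟨i, hi⟩ := hall
      have hit : (i, true) ∈ m := (hprec i).mpr hi
      have step : ∀ x : Fin (n + 2), (x, true) ∈ m → (x + 1, true) ∈ m := by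
        intro x hx
        have := hd x
        unfold ringEnabled ringPre at this
        have hnf : (x + 1, false) ∉ m := by
          intro hf
          exact this (by intro p hp; rcases hp with h | h <;> subst h <;> assumption)
        exact (hprec (x + 1)).mpr hnf
      open Fin.NatCast in
      have key : ∀ k : ℕ, (i + (k : Fin (n + 2)), true) ∈ m := by
        intro k
        induction k with
        | zero => simpa using hit
        | succ k ih =>
          have := step _ ih
          simpa [add_assoc, Nat.cast_succ] using this
      right
      intro j
      have := key (j - i).val
      open Fin.NatCast in
      simpa [Fin.cast_val_eq_self] using this
  · rintro (h | h) i hen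
    · have := hen (show (i, true) ∈ ringPre n i by left; rfl)
      exact (hprec i).mp this (h i)
    · have := hen (show (i + 1, false) ∈ ringPre n i by right; rfl)
      exact (hprec (i + 1)).mp (h (i + 1)) this
end

section
/- In the token-ring Petri net with n ≥ 2 stations, from any precise marking with token count k where 1 ≤ k ≤ n−1, some transition is enabled (there is no deadlock). -/
/-- From any precise marking with token count k, 1 ≤ k ≤ (number of stations) − 1,
    some transition is enabled. -/
theorem ring_no_deadlock (n : ℕ) (m : Set (RingPlace n))
    (hprec : ringPrecise n m)
    (hlo : 1 ≤ tokenCount n m) (hhi : tokenCount n m ≤ n + 1) :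
    ∃ i : Fin (n + 2), ringEnabled n m i := by
  by_contra h
  push_neg at h
  -- if station i has the token, station i+1 must too (else transition i enabled)
  have hstep : ∀ i : Fin (n + 2), (i, true) ∈ m → (i + 1, true) ∈ m := by
    intro i hi
    by_contra hc
    have hf : (i + 1, false) ∈ m := by
      by_contra hff
      exact hc ((hprec (i + 1)).mpr hff)
    exact h i (by
      intro p hp
      rcases hp with hp | hp
      · simpa [hp] using hi
      · simp only [Set.mem_singleton_iff] at hp
        simpa [hp] using hf)
  -- some station has the token
  have hne : {i : Fin (n + 2) | (i, true) ∈ m}.Nonempty := by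
    apply Set.nonempty_of_ncard_ne_zero
    have := hlo
    unfold tokenCount at this
    omega
  obtain ⟨i0, hi0⟩ := hne
  -- so all stations have tokens
  open Fin.NatCast in
  have hall : ∀ k : ℕ, ((i0 + (k : Fin (n + 2))), true) ∈ m := by
    intro k
    induction k with
    | zero => simpa using hi0
    | succ k ih =>
      have := hstep _ ih
      have hcast : ((k + 1 : ℕ) : Fin (n + 2)) = (k : Fin (n + 2)) + 1 := by
        push_cast; ring
      rw [hcast, ← add_assoc]
      exact this
  open Fin.NatCast in
  have huniv : {i : Fin (n + 2) | (i, true) ∈ m} = Set.univ := by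
    ext j
    simp only [Set.mem_setOf_eq, Set.mem_univ, iff_true]
    have := hall (j - i0).val
    rwa [Fin.cast_val_eq_self, add_sub_cancel] at this
  have : tokenCount n m = n + 2 := by
    unfold tokenCount
    rw [huniv, Set.ncard_univ, Nat.card_eq_fintype_card]
    simp
  omega
end

section
/- In the token-ring Petri net with n ≥ 2 stations started from a precise initial marking with token count k, if 1 ≤ k ≤ n−1 then no reachable marking is a deadlock. -/
lemma ring_succ_ne (n : ℕ) (i : Fin (n + 2)) : i + 1 ≠ i := by
  intro h
  have h1 : (1 : Fin (n + 2)) = 0 := by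
    have := congrArg (· - i) h
    simpa using this
  have : ((1 : Fin (n+2)) : ℕ) = 0 := by rw [h1]; rfl
  simp [Fin.val_one] at this

lemma ring_step_preserve (n : ℕ) {m m' : Set (RingPlace n)}
    (hp : ringPrecise n m) (h : ringStep n m m') :
    ringPrecise n m' ∧ tokenCount n m' = tokenCount n m := by
  obtain ⟨i, hpre, rfl⟩ := h
  have ht : (i, true) ∈ m := hpre (by simp [ringPre])
  have hf : (i + 1, false) ∈ m := hpre (by simp [ringPre])
  have hne : i + 1 ≠ i := ring_succ_ne n i
  have hnf : (i, false) ∉ m := (hp i).mp ht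
  have hnt : (i + 1, true) ∉ m := fun hh => (hp (i+1)).mp hh hf
  have hmem : ∀ (j : Fin (n+2)) (b : Bool),
      (j, b) ∈ (m \ ringPre n i) ∪ ringPost n i ↔
      (((j, b) ∈ m ∧ ¬(j = i ∧ b = true) ∧ ¬(j = i + 1 ∧ b = false)) ∨
        (j = i ∧ b = false) ∨ (j = i + 1 ∧ b = true)) := by
    intro j b
    simp [ringPre, ringPost, Set.mem_diff, Prod.ext_iff]
    tauto
  constructor
  · intro j
    rw [hmem, hmem]
    by_cases h1 : j = i
    · subst h1; simp [hne.symm, hnf, hnt]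
    · by_cases h2 : j = i + 1
      · subst h2; simp [hne, hf, hnt]
      · simpa [h1, h2] using hp j
  · have hset : {j : Fin (n+2) | (j, true) ∈ (m \ ringPre n i) ∪ ringPost n i} =
        insert (i + 1) ({j : Fin (n+2) | (j, true) ∈ m} \ {i}) := by
      ext j
      rw [Set.mem_setOf_eq, hmem]
      simp [Set.mem_insert_iff, Set.mem_diff]
      tauto
    unfold tokenCount
    rw [hset]
    have hi1 : i + 1 ∉ ({j : Fin (n+2) | (j, true) ∈ m} \ {i}) := by
      simp [hnt]
    have hiS : i ∈ {j : Fin (n+2) | (j, true) ∈ m} := ht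
    rw [Set.ncard_insert_of_notMem hi1 (Set.toFinite _),
      Set.ncard_diff_singleton_of_mem hiS]
    have hpos : 0 < {j : Fin (n+2) | (j, true) ∈ m}.ncard :=
      Set.ncard_pos (Set.toFinite _) |>.mpr ⟨i, hiS⟩
    omega

open scoped Fin.NatCast Fin.CommRing

lemma ring_precise_no_deadlock (n : ℕ) (m : Set (RingPlace n))
    (hp : ringPrecise n m) (hlo : 1 ≤ tokenCount n m) (hhi : tokenCount n m ≤ n + 1) :
    ¬ ringDeadlock n m := by
  intro hd
  have hstep : ∀ i : Fin (n+2), (i, true) ∈ m → (i + 1, true) ∈ m := by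
    intro i hi
    by_contra hni
    have hf : (i + 1, false) ∈ m := by
      by_contra hnf
      exact hni ((hp (i+1)).mpr hnf)
    apply hd i
    intro x hx
    simp only [ringPre, Set.mem_insert_iff, Set.mem_singleton_iff] at hx
    rcases hx with rfl | rfl
    · exact hi
    · exact hf
  obtain ⟨j, hj⟩ := Set.nonempty_of_ncard_ne_zero (by omega : tokenCount n m ≠ 0)
  have hall : ∀ k : ℕ, (j + (k : Fin (n+2)), true) ∈ m := by
    intro k
    induction k with
    | zero => simpa using hj
    | succ k ih =>
      have : ((k + 1 : ℕ) : Fin (n+2)) = (k : Fin (n+2)) + 1 := by push_cast; ring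
      rw [this, ← add_assoc]
      exact hstep _ ih
  have huniv : {i : Fin (n+2) | (i, true) ∈ m} = Set.univ := by
    ext i
    simp only [Set.mem_setOf_eq, Set.mem_univ, iff_true]
    have := hall ((i - j).val)
    rwa [Fin.cast_val_eq_self, add_sub_cancel] at this
  have : tokenCount n m = n + 2 := by
    unfold tokenCount
    rw [huniv, Set.ncard_univ]
    simp
  omega

/-- Started from a precise initial marking with token count k, 1 ≤ k ≤ n − 1,
    no reachable marking of the token-ring net is a deadlock. -/
theorem ring_reachable_no_deadlock (n : ℕ) (m₀ : Set (RingPlace n))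
    (hprec : ringPrecise n m₀)
    (hlo : 1 ≤ tokenCount n m₀) (hhi : tokenCount n m₀ ≤ n + 1)
    (m : Set (RingPlace n))
    (hreach : Relation.ReflTransGen (ringStep n) m₀ m) :
    ¬ ringDeadlock n m := by
  have key : ringPrecise n m ∧ tokenCount n m = tokenCount n m₀ := by
    induction hreach with
    | refl => exact ⟨hprec, rfl⟩
    | tail _ hstep ih =>
      obtain ⟨hp, hc⟩ := ih
      obtain ⟨hp', hc'⟩ := ring_step_preserve n hp hstep
      exact ⟨hp', hc'.trans hc⟩
  exact ring_precise_no_deadlock n m key.1 (key.2 ▸ hlo) (key.2 ▸ hhi)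
end
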